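/- Let X = (X₁, X₂) and Y = (Y₁, Y₂) be nonnegative bivariate random vectors with joint CDFs F_X, F_Y, and let u : ℝ≥0 × ℝ≥0 → ℝ≥0 be C² with ∂u/∂x₁ ≥ 0, ∂u/∂x₂ ≥ 0, and ∂²u/∂x₁∂x₂ ≤ 0. If F_X(t,z) ≤ F_Y(t,z) for all t, z ≥ 0, then E[u(X)] ≥ E[u(Y)]. -/

import Mathlib

open MeasureTheory
open Set
open scoped ENNReal

-- helper 1: ENNReal arithmetic key lemma
private lemma enn_key {m m' a a' b b' c c' s s' r r' : ℝ≥0∞}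
    (h1 : m + (a + b) = 1 + c) (h2 : m' + (a' + b') = 1 + c') (hc : c ≤ c')
    (ha : a + s = 1) (ha' : a' + s' = 1) (hs' : s' ≤ s)
    (hb : b + r = 1) (hb' : b' + r' = 1) (hr' : r' ≤ r) :
    m ≤ m' + (s - s') + (r - r') := by
  have hone : (1:ℝ≥0∞) ≠ ⊤ := ENNReal.one_ne_top
  have hsfin : s ≠ ⊤ := fun h => hone (by rw [← ha, h, add_top])
  have hs'fin : s' ≠ ⊤ := fun h => hone (by rw [← ha', h, add_top])
  have hrfin : r ≠ ⊤ := fun h => hone (by rw [← hb, h, add_top])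
  have hr'fin : r' ≠ ⊤ := fun h => hone (by rw [← hb', h, add_top])
  have hafin : a ≠ ⊤ := fun h => hone (by rw [← ha, h, top_add])
  have hbfin : b ≠ ⊤ := fun h => hone (by rw [← hb, h, top_add])
  -- a' = a + (s - s')
  have haa' : a' = a + (s - s') := by
    have e1 : a + (s - s') + s' = a + s := by
      rw [add_assoc, tsub_add_cancel_of_le hs']
    have e2 : s' + a' = s' + (a + (s - s')) := by
      rw [add_comm s' a', add_comm s' _, e1, ha, ha']
    exact (ENNReal.add_right_inj hs'fin).mp e2
  have hbb' : b' = b + (r - r') := by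
    have e1 : b + (r - r') + r' = b + r := by
      rw [add_assoc, tsub_add_cancel_of_le hr']
    have e2 : r' + b' = r' + (b + (r - r')) := by
      rw [add_comm r' b', add_comm r' _, e1, hb, hb']
    exact (ENNReal.add_right_inj hr'fin).mp e2
  have key : m + (a + b) ≤ (m' + (s - s') + (r - r')) + (a + b) := by
    calc m + (a + b) = 1 + c := h1
      _ ≤ 1 + c' := add_le_add_right hc 1
      _ = m' + (a' + b') := h2.symm
      _ = m' + (a + (s - s') + (b + (r - r'))) := by rw [haa', hbb']
      _ = (m' + (s - s') + (r - r')) + (a + b) := by ring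
  exact (ENNReal.add_le_add_iff_right (by
    simp [ENNReal.add_eq_top, hafin, hbfin])).mp key

-- helper 2: lintegral over Ioi 0 bounded via Ioc 0 n
private lemma lint_Ioi_le_of_Ioc {g : ℝ → ℝ≥0∞} (hg : Measurable g) {c : ℝ≥0∞}
    (h : ∀ n : ℕ, ∫⁻ x in Set.Ioc (0:ℝ) (n:ℝ), g x ≤ c) :
    ∫⁻ x in Set.Ioi (0:ℝ), g x ≤ c := by
  have hsup : ∀ x, (⨆ n : ℕ, (Set.Ioc (0:ℝ) (n:ℝ)).indicator g x) = (Set.Ioi (0:ℝ)).indicator g x := by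
    intro x
    by_cases hx : x ∈ Set.Ioi (0:ℝ)
    · rw [Set.indicator_of_mem hx]
      obtain ⟨n, hn⟩ := exists_nat_ge x
      apply le_antisymm
      · exact iSup_le fun m => Set.indicator_le' (fun _ _ => le_rfl) (fun _ _ => zero_le) x
      · refine le_iSup_of_le n ?_
        rw [Set.indicator_of_mem (Set.mem_Ioc.mpr ⟨hx, hn⟩)]
    · rw [Set.indicator_of_notMem hx]
      simp only [ENNReal.iSup_eq_zero]
      intro n
      apply Set.indicator_of_notMem
      exact fun hmem => hx hmem.1
  have hmono : Monotone fun n : ℕ => (Set.Ioc (0:ℝ) (n:ℝ)).indicator g := by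
    intro n m hnm x
    simp only
    by_cases hx : x ∈ Set.Ioc (0:ℝ) (n:ℝ)
    · rw [Set.indicator_of_mem hx,
        Set.indicator_of_mem (Set.mem_Ioc.mpr ⟨hx.1, hx.2.trans (by exact_mod_cast hnm)⟩)]
    · rw [Set.indicator_of_notMem hx]; exact zero_le
  calc ∫⁻ x in Set.Ioi (0:ℝ), g x
      = ∫⁻ x, (Set.Ioi (0:ℝ)).indicator g x := (lintegral_indicator measurableSet_Ioi g).symm
    _ = ∫⁻ x, ⨆ n : ℕ, (Set.Ioc (0:ℝ) (n:ℝ)).indicator g x := by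
        apply lintegral_congr; intro x; rw [hsup]
    _ = ⨆ n : ℕ, ∫⁻ x, (Set.Ioc (0:ℝ) (n:ℝ)).indicator g x := by
        exact lintegral_iSup (fun n => hg.indicator measurableSet_Ioc) hmono
    _ = ⨆ n : ℕ, ∫⁻ x in Set.Ioc (0:ℝ) (n:ℝ), g x := by
        simp_rw [lintegral_indicator measurableSet_Ioc]
    _ ≤ c := iSup_le h

set_option maxHeartbeats 2000000 in

set_option maxHeartbeats 2000000 in
theorem bivariate_fsd_implies_expected_utility_le
    {Ω : Type*} [MeasurableSpace Ω] (μ : Measure Ω) [IsProbabilityMeasure μ]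
    (X Y : Ω → ℝ × ℝ) (hX : Measurable X) (hY : Measurable Y)
    (hXnn : ∀ ω, 0 ≤ (X ω).1 ∧ 0 ≤ (X ω).2)
    (hYnn : ∀ ω, 0 ≤ (Y ω).1 ∧ 0 ≤ (Y ω).2)
    (u : ℝ → ℝ → ℝ)
    (hunn : ∀ x y, 0 ≤ x → 0 ≤ y → 0 ≤ u x y)
    (huC2 : ContDiff ℝ 2 (fun p : ℝ × ℝ => u p.1 p.2))
    (hu1 : ∀ x y, 0 ≤ deriv (fun t => u t y) x)
    (hu2 : ∀ x y, 0 ≤ deriv (fun z => u x z) y)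
    (hu12 : ∀ x y, deriv (fun z => deriv (fun t => u t z) x) y ≤ 0)
    (huXint : Integrable (fun ω => u (X ω).1 (X ω).2) μ)
    (huYint : Integrable (fun ω => u (Y ω).1 (Y ω).2) μ)
    (hFSD : ∀ t z : ℝ, 0 ≤ t → 0 ≤ z →
      μ {ω | (X ω).1 ≤ t ∧ (X ω).2 ≤ z} ≤ μ {ω | (Y ω).1 ≤ t ∧ (Y ω).2 ≤ z}) :
    ∫ ω, u (Y ω).1 (Y ω).2 ∂μ ≤ ∫ ω, u (X ω).1 (X ω).2 ∂μ := by
  set f : ℝ × ℝ → ℝ := fun p => u p.1 p.2 with hfdef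
  have hfd : Differentiable ℝ f := huC2.differentiable (by norm_num)
  have hf'C1 : ContDiff ℝ 1 (fderiv ℝ f) := huC2.fderiv_right (by norm_num)
  have hfd' : Differentiable ℝ (fderiv ℝ f) := hf'C1.differentiable one_ne_zero
  have hcf' : Continuous (fderiv ℝ f) := hf'C1.continuous
  have hcf'' : Continuous (fderiv ℝ (fderiv ℝ f)) := hf'C1.continuous_fderiv one_ne_zero
  set p1 : ℝ → ℝ → ℝ := fun x y => fderiv ℝ f (x, y) (1, 0) with hp1def
  set p2 : ℝ → ℝ → ℝ := fun x y => fderiv ℝ f (x, y) (0, 1) with hp2def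
  set q : ℝ → ℝ → ℝ := fun x y => fderiv ℝ (fderiv ℝ f) (x, y) (0, 1) (1, 0) with hqdef
  -- partial derivative facts
  have hderiv1 : ∀ x y : ℝ, HasDerivAt (fun t => u t y) (p1 x y) x := by
    intro x y
    have hcurve : HasDerivAt (fun t : ℝ => (t, y)) ((1 : ℝ), (0 : ℝ)) x :=
      (hasDerivAt_id x).prodMk (hasDerivAt_const x y)
    have h := ((hfd (x, y)).hasFDerivAt).comp_hasDerivAt x hcurve
    simpa [Function.comp_def] using h
  have hderiv2 : ∀ x y : ℝ, HasDerivAt (fun z => u x z) (p2 x y) y := by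
    intro x y
    have hcurve : HasDerivAt (fun z : ℝ => (x, z)) ((0 : ℝ), (1 : ℝ)) y :=
      (hasDerivAt_const y x).prodMk (hasDerivAt_id y)
    have h := ((hfd (x, y)).hasFDerivAt).comp_hasDerivAt y hcurve
    simpa [Function.comp_def] using h
  have hp1nn : ∀ x y, 0 ≤ p1 x y := by
    intro x y; rw [← (hderiv1 x y).deriv]; exact hu1 x y
  have hp2nn : ∀ x y, 0 ≤ p2 x y := by
    intro x y; rw [← (hderiv2 x y).deriv]; exact hu2 x y
  have hp1c : Continuous fun p : ℝ × ℝ => fderiv ℝ f p ((1:ℝ), (0:ℝ)) :=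
    (ContinuousLinearMap.apply ℝ ℝ ((1:ℝ), (0:ℝ))).continuous.comp hcf'
  have hp2c : Continuous fun p : ℝ × ℝ => fderiv ℝ f p ((0:ℝ), (1:ℝ)) :=
    (ContinuousLinearMap.apply ℝ ℝ ((0:ℝ), (1:ℝ))).continuous.comp hcf'
  have hqc : Continuous fun p : ℝ × ℝ => q p.1 p.2 := by
    have h1 : Continuous fun p : ℝ × ℝ => fderiv ℝ (fderiv ℝ f) p ((0:ℝ), (1:ℝ)) :=
      (ContinuousLinearMap.apply ℝ (ℝ × ℝ →L[ℝ] ℝ) ((0:ℝ), (1:ℝ))).continuous.comp hcf''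
    exact (ContinuousLinearMap.apply ℝ ℝ ((1:ℝ), (0:ℝ))).continuous.comp h1
  -- second-order derivative facts
  have hderivq : ∀ x y : ℝ, HasDerivAt (fun z => p1 x z) (q x y) y := by
    intro x y
    have hcurve : HasDerivAt (fun z : ℝ => (x, z)) ((0 : ℝ), (1 : ℝ)) y :=
      (hasDerivAt_const y x).prodMk (hasDerivAt_id y)
    have hev : HasFDerivAt (fun p : ℝ × ℝ => fderiv ℝ f p ((1:ℝ), (0:ℝ)))
        ((ContinuousLinearMap.apply ℝ ℝ ((1:ℝ), (0:ℝ))).comp (fderiv ℝ (fderiv ℝ f) (x, y)))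
        (x, y) :=
      (ContinuousLinearMap.apply ℝ ℝ ((1:ℝ), (0:ℝ))).hasFDerivAt.comp (x, y)
        (hfd' (x, y)).hasFDerivAt
    have h := hev.comp_hasDerivAt y hcurve
    simpa [Function.comp_def] using h
  have hsymm : ∀ x y : ℝ,
      fderiv ℝ (fderiv ℝ f) (x, y) ((1:ℝ), (0:ℝ)) ((0:ℝ), (1:ℝ)) = q x y := by
    intro x y
    exact second_derivative_symmetric (fun p => (hfd p).hasFDerivAt)
      (hfd' (x, y)).hasFDerivAt _ _
  have hderivq2 : ∀ x y : ℝ, HasDerivAt (fun t => p2 t y) (q x y) x := by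
    intro x y
    have hcurve : HasDerivAt (fun t : ℝ => (t, y)) ((1 : ℝ), (0 : ℝ)) x :=
      (hasDerivAt_id x).prodMk (hasDerivAt_const x y)
    have hev : HasFDerivAt (fun p : ℝ × ℝ => fderiv ℝ f p ((0:ℝ), (1:ℝ)))
        ((ContinuousLinearMap.apply ℝ ℝ ((0:ℝ), (1:ℝ))).comp (fderiv ℝ (fderiv ℝ f) (x, y)))
        (x, y) :=
      (ContinuousLinearMap.apply ℝ ℝ ((0:ℝ), (1:ℝ))).hasFDerivAt.comp (x, y)
        (hfd' (x, y)).hasFDerivAt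
    have h := hev.comp_hasDerivAt x hcurve
    rw [← hsymm x y]
    simpa [Function.comp_def] using h
  have hqnp : ∀ x y, q x y ≤ 0 := by
    intro x y
    have h1 : (fun z => deriv (fun t => u t z) x) = fun z => p1 x z :=
      funext fun z => (hderiv1 x z).deriv
    have h2 : deriv (fun z => deriv (fun t => u t z) x) y = q x y := by
      rw [h1]; exact (hderivq x y).deriv
    rw [← h2]; exact hu12 x y
  -- marginal partials and mixed partial (negated)
  set g1 : ℝ → ℝ := fun t => p1 t 0 with hg1def
  set g2 : ℝ → ℝ := fun z => p2 0 z with hg2def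
  set kk : ℝ → ℝ → ℝ := fun t z => -q t z with hkkdef
  have hkknn : ∀ t z, 0 ≤ kk t z := fun t z => neg_nonneg.mpr (hqnp t z)
  have hkkc : Continuous fun p : ℝ × ℝ => kk p.1 p.2 := hqc.neg
  have hg1c : Continuous g1 := hp1c.comp (continuous_id.prodMk continuous_const)
  have hg2c : Continuous g2 := hp2c.comp (continuous_const.prodMk continuous_id)
  -- FTC identities
  have hF1 : ∀ y a : ℝ, ∫ t in (0:ℝ)..a, p1 t y = u a y - u 0 y := by
    intro y a
    refine intervalIntegral.integral_eq_sub_of_hasDerivAt (fun x _ => hderiv1 x y) ?_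
    exact (hp1c.comp (continuous_id.prodMk continuous_const)).intervalIntegrable 0 a
  have hF2 : ∀ x b : ℝ, ∫ z in (0:ℝ)..b, p2 x z = u x b - u x 0 := by
    intro x b
    refine intervalIntegral.integral_eq_sub_of_hasDerivAt (fun z _ => hderiv2 x z) ?_
    exact (hp2c.comp (continuous_const.prodMk continuous_id)).intervalIntegrable 0 b
  have hF3 : ∀ x b : ℝ, ∫ z in (0:ℝ)..b, kk x z = p1 x 0 - p1 x b := by
    intro x b
    have h : ∫ z in (0:ℝ)..b, q x z = p1 x b - p1 x 0 := by
      refine intervalIntegral.integral_eq_sub_of_hasDerivAt (fun z _ => hderivq x z) ?_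
      exact (hqc.comp (continuous_const.prodMk continuous_id)).intervalIntegrable 0 b
    have h2 : ∫ z in (0:ℝ)..b, kk x z = -∫ z in (0:ℝ)..b, q x z := by
      rw [← intervalIntegral.integral_neg]
    rw [h2, h]; ring
  have hF4 : ∀ y a : ℝ, ∫ t in (0:ℝ)..a, kk t y = p2 0 y - p2 a y := by
    intro y a
    have h : ∫ t in (0:ℝ)..a, q t y = p2 a y - p2 0 y := by
      refine intervalIntegral.integral_eq_sub_of_hasDerivAt (fun t _ => hderivq2 t y) ?_
      exact (hqc.comp (continuous_id.prodMk continuous_const)).intervalIntegrable 0 a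
    have h2 : ∫ t in (0:ℝ)..a, kk t y = -∫ t in (0:ℝ)..a, q t y := by
      rw [← intervalIntegral.integral_neg]
    rw [h2, h]; ring
  -- the "interaction" function W
  set W : ℝ → ℝ → ℝ := fun a b => u a 0 + u 0 b - u 0 0 - u a b with hWdef
  have hWc : Continuous fun p : ℝ × ℝ => W p.1 p.2 := by
    have hfc : Continuous f := huC2.continuous
    exact (((hfc.comp (continuous_fst.prodMk continuous_const)).add
      (hfc.comp (continuous_const.prodMk continuous_snd))).sub continuous_const).sub hfc
  have hp1diff : ∀ t b : ℝ, 0 ≤ b → 0 ≤ p1 t 0 - p1 t b := by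
    intro t b hb
    rw [← hF3 t b]
    exact intervalIntegral.integral_nonneg hb (fun z _ => hkknn t z)
  have hMasterW : ∀ a b : ℝ, ∫ t in (0:ℝ)..a, (p1 t 0 - p1 t b) = W a b := by
    intro a b
    have hi1 : IntervalIntegrable (fun t => p1 t 0) volume 0 a :=
      (hp1c.comp (continuous_id.prodMk continuous_const)).intervalIntegrable 0 a
    have hi2 : IntervalIntegrable (fun t => p1 t b) volume 0 a :=
      (hp1c.comp (continuous_id.prodMk continuous_const)).intervalIntegrable 0 a
    rw [intervalIntegral.integral_sub hi1 hi2, hF1 0 a, hF1 b a, hWdef]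
    ring
  have hWnn : ∀ a b : ℝ, 0 ≤ a → 0 ≤ b → 0 ≤ W a b := by
    intro a b ha hb
    rw [← hMasterW a b]
    exact intervalIntegral.integral_nonneg ha (fun t _ => hp1diff t b hb)
  -- nonnegativity / monotonicity of margins
  have hG1nn : ∀ a : ℝ, 0 ≤ a → 0 ≤ u a 0 - u 0 0 := by
    intro a ha
    rw [← hF1 0 a]
    exact intervalIntegral.integral_nonneg ha (fun t _ => hp1nn t 0)
  have hG2nn : ∀ b : ℝ, 0 ≤ b → 0 ≤ u 0 b - u 0 0 := by
    intro b hb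
    rw [← hF2 0 b]
    exact intervalIntegral.integral_nonneg hb (fun z _ => hp2nn 0 z)
  have hmono2 : ∀ a b : ℝ, 0 ≤ b → u a 0 ≤ u a b := by
    intro a b hb
    have : 0 ≤ u a b - u a 0 := by
      rw [← hF2 a b]
      exact intervalIntegral.integral_nonneg hb (fun z _ => hp2nn a z)
    linarith
  have hmono1 : ∀ a b : ℝ, 0 ≤ a → u 0 b ≤ u a b := by
    intro a b ha
    have : 0 ≤ u a b - u 0 b := by
      rw [← hF1 b a]
      exact intervalIntegral.integral_nonneg ha (fun t _ => hp1nn t b)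
    linarith
  -- measurability of coordinates
  have hX1 : Measurable fun ω => (X ω).1 := hX.fst
  have hX2 : Measurable fun ω => (X ω).2 := hX.snd
  have hY1 : Measurable fun ω => (Y ω).1 := hY.fst
  have hY2 : Measurable fun ω => (Y ω).2 := hY.snd
  -- strict versions of FSD
  have hlt : ∀ t z : ℝ,
      μ {ω | (X ω).1 < t ∧ (X ω).2 < z} ≤ μ {ω | (Y ω).1 < t ∧ (Y ω).2 < z} := by
    intro t z
    have hXeq : {ω | (X ω).1 < t ∧ (X ω).2 < z} =
        ⋃ n : ℕ, {ω | (X ω).1 ≤ t - 1/(n+1) ∧ (X ω).2 ≤ z - 1/(n+1)} := by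
      ext ω
      simp only [Set.mem_setOf_eq, Set.mem_iUnion]
      constructor
      · rintro ⟨h1, h2⟩
        have hpos : (0:ℝ) < min (t - (X ω).1) (z - (X ω).2) :=
          lt_min (sub_pos.mpr h1) (sub_pos.mpr h2)
        obtain ⟨n, hn⟩ := exists_nat_one_div_lt hpos
        have hn1 : 1/((n:ℝ)+1) < t - (X ω).1 := hn.trans_le (min_le_left _ _)
        have hn2 : 1/((n:ℝ)+1) < z - (X ω).2 := hn.trans_le (min_le_right _ _)
        exact ⟨n, by linarith, by linarith⟩
      · rintro ⟨n, h1, h2⟩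
        have hpos : (0:ℝ) < 1/((n:ℝ)+1) := by positivity
        exact ⟨by linarith, by linarith⟩
    have hYeq : {ω | (Y ω).1 < t ∧ (Y ω).2 < z} =
        ⋃ n : ℕ, {ω | (Y ω).1 ≤ t - 1/(n+1) ∧ (Y ω).2 ≤ z - 1/(n+1)} := by
      ext ω
      simp only [Set.mem_setOf_eq, Set.mem_iUnion]
      constructor
      · rintro ⟨h1, h2⟩
        have hpos : (0:ℝ) < min (t - (Y ω).1) (z - (Y ω).2) :=
          lt_min (sub_pos.mpr h1) (sub_pos.mpr h2)
        obtain ⟨n, hn⟩ := exists_nat_one_div_lt hpos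
        have hn1 : 1/((n:ℝ)+1) < t - (Y ω).1 := hn.trans_le (min_le_left _ _)
        have hn2 : 1/((n:ℝ)+1) < z - (Y ω).2 := hn.trans_le (min_le_right _ _)
        exact ⟨n, by linarith, by linarith⟩
      · rintro ⟨n, h1, h2⟩
        have hpos : (0:ℝ) < 1/((n:ℝ)+1) := by positivity
        exact ⟨by linarith, by linarith⟩
    have hkey : ∀ n : ℕ, (1:ℝ)/((n:ℝ)+1) ≤ 1/((n:ℝ)+1) := fun n => le_rfl
    have hmonoaux : ∀ n m : ℕ, n ≤ m → (1:ℝ)/((m:ℝ)+1) ≤ 1/((n:ℝ)+1) := by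
      intro n m hnm
      apply one_div_le_one_div_of_le (by positivity)
      have : (n:ℝ) ≤ (m:ℝ) := by exact_mod_cast hnm
      linarith
    have hdirX : Directed (· ⊆ ·)
        (fun n : ℕ => {ω | (X ω).1 ≤ t - 1/(n+1) ∧ (X ω).2 ≤ z - 1/(n+1)}) := by
      apply Monotone.directed_le
      intro n m hnm ω hω
      have := hmonoaux n m hnm
      exact ⟨by linarith [hω.1], by linarith [hω.2]⟩
    have hdirY : Directed (· ⊆ ·)
        (fun n : ℕ => {ω | (Y ω).1 ≤ t - 1/(n+1) ∧ (Y ω).2 ≤ z - 1/(n+1)}) := by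
      apply Monotone.directed_le
      intro n m hnm ω hω
      have := hmonoaux n m hnm
      exact ⟨by linarith [hω.1], by linarith [hω.2]⟩
    rw [hXeq, hYeq, hdirX.measure_iUnion, hdirY.measure_iUnion]
    refine iSup_mono fun n => ?_
    by_cases hn : 0 ≤ t - 1/((n:ℝ)+1) ∧ 0 ≤ z - 1/((n:ℝ)+1)
    · exact hFSD _ _ hn.1 hn.2
    · have hempty : {ω | (X ω).1 ≤ t - 1/((n:ℝ)+1) ∧ (X ω).2 ≤ z - 1/((n:ℝ)+1)} = ∅ := by
        rw [Set.eq_empty_iff_forall_notMem]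
        rintro ω ⟨h1, h2⟩
        rcases not_and_or.mp hn with h | h
        · exact h (le_trans (hXnn ω).1 h1)
        · exact h (le_trans (hXnn ω).2 h2)
      rw [hempty]
      simp
  have hmonoaux : ∀ n m : ℕ, n ≤ m → (1:ℝ)/((m:ℝ)+1) ≤ 1/((n:ℝ)+1) := by
    intro n m hnm
    apply one_div_le_one_div_of_le (by positivity)
    have : (n:ℝ) ≤ (m:ℝ) := by exact_mod_cast hnm
    linarith
  have hlt1 : ∀ t : ℝ, μ {ω | (X ω).1 < t} ≤ μ {ω | (Y ω).1 < t} := by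
    intro t
    have hXeq : {ω | (X ω).1 < t} =
        ⋃ n : ℕ, {ω | (X ω).1 ≤ t - 1/(n+1) ∧ (X ω).2 ≤ (n:ℝ)} := by
      ext ω
      simp only [Set.mem_setOf_eq, Set.mem_iUnion]
      constructor
      · intro h1
        obtain ⟨n₀, hn₀⟩ := exists_nat_one_div_lt (sub_pos.mpr h1)
        obtain ⟨n₁, hn₁⟩ := exists_nat_ge (X ω).2
        refine ⟨max n₀ n₁, ?_, ?_⟩
        · have h2 : (1:ℝ)/(((max n₀ n₁ : ℕ):ℝ)+1) ≤ 1/((n₀:ℝ)+1) :=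
            hmonoaux n₀ (max n₀ n₁) (le_max_left _ _)
          linarith
        · exact hn₁.trans (by exact_mod_cast Nat.le_max_right n₀ n₁)
      · rintro ⟨n, h1, _⟩
        have hpos : (0:ℝ) < 1/((n:ℝ)+1) := by positivity
        linarith
    have hdirX : Directed (· ⊆ ·)
        (fun n : ℕ => {ω | (X ω).1 ≤ t - 1/(n+1) ∧ (X ω).2 ≤ (n:ℝ)}) := by
      apply Monotone.directed_le
      intro n m hnm ω hω
      have h2 := hmonoaux n m hnm
      have h3 : (n:ℝ) ≤ (m:ℝ) := by exact_mod_cast hnm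
      exact ⟨by linarith [hω.1], by linarith [hω.2]⟩
    rw [hXeq, hdirX.measure_iUnion]
    refine iSup_le fun n => ?_
    have hstep : μ {ω | (X ω).1 ≤ t - 1/((n:ℝ)+1) ∧ (X ω).2 ≤ (n:ℝ)} ≤
        μ {ω | (Y ω).1 ≤ t - 1/((n:ℝ)+1) ∧ (Y ω).2 ≤ (n:ℝ)} := by
      by_cases hn : 0 ≤ t - 1/((n:ℝ)+1)
      · exact hFSD _ _ hn (Nat.cast_nonneg n)
      · have hempty : {ω | (X ω).1 ≤ t - 1/((n:ℝ)+1) ∧ (X ω).2 ≤ (n:ℝ)} = ∅ := by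
          rw [Set.eq_empty_iff_forall_notMem]
          rintro ω ⟨h1, _⟩
          exact hn (le_trans (hXnn ω).1 h1)
        rw [hempty]; simp
    refine hstep.trans (measure_mono ?_)
    rintro ω ⟨h1, _⟩
    have hpos : (0:ℝ) < 1/((n:ℝ)+1) := by positivity
    exact lt_of_le_of_lt h1 (by linarith)
  have hlt2 : ∀ z : ℝ, μ {ω | (X ω).2 < z} ≤ μ {ω | (Y ω).2 < z} := by
    intro z
    have hXeq : {ω | (X ω).2 < z} =
        ⋃ n : ℕ, {ω | (X ω).1 ≤ (n:ℝ) ∧ (X ω).2 ≤ z - 1/(n+1)} := by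
      ext ω
      simp only [Set.mem_setOf_eq, Set.mem_iUnion]
      constructor
      · intro h1
        obtain ⟨n₀, hn₀⟩ := exists_nat_one_div_lt (sub_pos.mpr h1)
        obtain ⟨n₁, hn₁⟩ := exists_nat_ge (X ω).1
        refine ⟨max n₀ n₁, ?_, ?_⟩
        · exact hn₁.trans (by exact_mod_cast Nat.le_max_right n₀ n₁)
        · have h2 : (1:ℝ)/(((max n₀ n₁ : ℕ):ℝ)+1) ≤ 1/((n₀:ℝ)+1) :=
            hmonoaux n₀ (max n₀ n₁) (le_max_left _ _)
          linarith
      · rintro ⟨n, _, h2⟩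
        have hpos : (0:ℝ) < 1/((n:ℝ)+1) := by positivity
        linarith
    have hdirX : Directed (· ⊆ ·)
        (fun n : ℕ => {ω | (X ω).1 ≤ (n:ℝ) ∧ (X ω).2 ≤ z - 1/(n+1)}) := by
      apply Monotone.directed_le
      intro n m hnm ω hω
      have h2 := hmonoaux n m hnm
      have h3 : (n:ℝ) ≤ (m:ℝ) := by exact_mod_cast hnm
      exact ⟨by linarith [hω.1], by linarith [hω.2]⟩
    rw [hXeq, hdirX.measure_iUnion]
    refine iSup_le fun n => ?_
    have hstep : μ {ω | (X ω).1 ≤ (n:ℝ) ∧ (X ω).2 ≤ z - 1/((n:ℝ)+1)} ≤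
        μ {ω | (Y ω).1 ≤ (n:ℝ) ∧ (Y ω).2 ≤ z - 1/((n:ℝ)+1)} := by
      by_cases hn : 0 ≤ z - 1/((n:ℝ)+1)
      · exact hFSD _ _ (Nat.cast_nonneg n) hn
      · have hempty : {ω | (X ω).1 ≤ (n:ℝ) ∧ (X ω).2 ≤ z - 1/((n:ℝ)+1)} = ∅ := by
          rw [Set.eq_empty_iff_forall_notMem]
          rintro ω ⟨_, h2⟩
          exact hn (le_trans (hXnn ω).2 h2)
        rw [hempty]; simp
    refine hstep.trans (measure_mono ?_)
    rintro ω ⟨_, h2⟩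
    have hpos : (0:ℝ) < 1/((n:ℝ)+1) := by positivity
    exact lt_of_le_of_lt h2 (by linarith)
  -- survival functions
  set SX1 : ℝ → ℝ≥0∞ := fun t => μ {ω | t ≤ (X ω).1} with hSX1def
  set SX2 : ℝ → ℝ≥0∞ := fun z => μ {ω | z ≤ (X ω).2} with hSX2def
  set SY1 : ℝ → ℝ≥0∞ := fun t => μ {ω | t ≤ (Y ω).1} with hSY1def
  set SY2 : ℝ → ℝ≥0∞ := fun z => μ {ω | z ≤ (Y ω).2} with hSY2def
  set mX : ℝ → ℝ → ℝ≥0∞ := fun t z => μ {ω | t ≤ (X ω).1 ∧ z ≤ (X ω).2} with hmXdef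
  set mY : ℝ → ℝ → ℝ≥0∞ := fun t z => μ {ω | t ≤ (Y ω).1 ∧ z ≤ (Y ω).2} with hmYdef
  -- complements / partitions
  have hcompl1X : ∀ t : ℝ, {ω | (X ω).1 < t}ᶜ = {ω | t ≤ (X ω).1} := by
    intro t; ext ω; simp [not_lt]
  have hcompl2X : ∀ z : ℝ, {ω | (X ω).2 < z}ᶜ = {ω | z ≤ (X ω).2} := by
    intro z; ext ω; simp [not_lt]
  have hcompl1Y : ∀ t : ℝ, {ω | (Y ω).1 < t}ᶜ = {ω | t ≤ (Y ω).1} := by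
    intro t; ext ω; simp [not_lt]
  have hcompl2Y : ∀ z : ℝ, {ω | (Y ω).2 < z}ᶜ = {ω | z ≤ (Y ω).2} := by
    intro z; ext ω; simp [not_lt]
  have hpart1X : ∀ t : ℝ, μ {ω | (X ω).1 < t} + SX1 t = 1 := by
    intro t
    rw [hSX1def]
    simp only [← hcompl1X t]
    simpa using measure_add_measure_compl (μ := μ) (measurableSet_lt hX1 measurable_const)
  have hpart2X : ∀ z : ℝ, μ {ω | (X ω).2 < z} + SX2 z = 1 := by
    intro z
    rw [hSX2def]
    simp only [← hcompl2X z]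
    simpa using measure_add_measure_compl (μ := μ) (measurableSet_lt hX2 measurable_const)
  have hpart1Y : ∀ t : ℝ, μ {ω | (Y ω).1 < t} + SY1 t = 1 := by
    intro t
    rw [hSY1def]
    simp only [← hcompl1Y t]
    simpa using measure_add_measure_compl (μ := μ) (measurableSet_lt hY1 measurable_const)
  have hpart2Y : ∀ z : ℝ, μ {ω | (Y ω).2 < z} + SY2 z = 1 := by
    intro z
    rw [hSY2def]
    simp only [← hcompl2Y z]
    simpa using measure_add_measure_compl (μ := μ) (measurableSet_lt hY2 measurable_const)
  -- survival dominance
  have hS1 : ∀ t : ℝ, SY1 t ≤ SX1 t := by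
    intro t
    rw [hSY1def, hSX1def]
    simp only [← hcompl1X t, ← hcompl1Y t]
    rw [prob_compl_eq_one_sub (measurableSet_lt hX1 measurable_const),
      prob_compl_eq_one_sub (measurableSet_lt hY1 measurable_const)]
    exact tsub_le_tsub_left (hlt1 t) 1
  have hS2 : ∀ z : ℝ, SY2 z ≤ SX2 z := by
    intro z
    rw [hSY2def, hSX2def]
    simp only [← hcompl2X z, ← hcompl2Y z]
    rw [prob_compl_eq_one_sub (measurableSet_lt hX2 measurable_const),
      prob_compl_eq_one_sub (measurableSet_lt hY2 measurable_const)]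
    exact tsub_le_tsub_left (hlt2 z) 1
  -- inclusion-exclusion
  have hIE : ∀ {A B : Set Ω}, MeasurableSet A → MeasurableSet B →
      μ (A ∩ B) + (μ Aᶜ + μ Bᶜ) = 1 + μ (Aᶜ ∩ Bᶜ) := by
    intro A B hA hB
    have h1 : μ Aᶜ + μ Bᶜ = μ (Aᶜ ∪ Bᶜ) + μ (Aᶜ ∩ Bᶜ) :=
      (measure_union_add_inter _ hB.compl).symm
    have h2 : μ (A ∩ B) + μ (Aᶜ ∪ Bᶜ) = 1 := by
      rw [← Set.compl_inter]
      simpa using measure_add_measure_compl (μ := μ) (hA.inter hB)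
    calc μ (A ∩ B) + (μ Aᶜ + μ Bᶜ) = μ (A ∩ B) + μ (Aᶜ ∪ Bᶜ) + μ (Aᶜ ∩ Bᶜ) := by
          rw [h1, add_assoc]
      _ = 1 + μ (Aᶜ ∩ Bᶜ) := by rw [h2]
  -- the pointwise key inequality
  have hm : ∀ t z : ℝ, mX t z ≤ mY t z + (SX1 t - SY1 t) + (SX2 z - SY2 z) := by
    intro t z
    have hsetX : {ω | t ≤ (X ω).1 ∧ z ≤ (X ω).2} =
        {ω | t ≤ (X ω).1} ∩ {ω | z ≤ (X ω).2} := rfl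
    have hsetY : {ω | t ≤ (Y ω).1 ∧ z ≤ (Y ω).2} =
        {ω | t ≤ (Y ω).1} ∩ {ω | z ≤ (Y ω).2} := rfl
    have hIEX := hIE (A := {ω | t ≤ (X ω).1}) (B := {ω | z ≤ (X ω).2})
      (measurableSet_le measurable_const hX1) (measurableSet_le measurable_const hX2)
    have hIEY := hIE (A := {ω | t ≤ (Y ω).1}) (B := {ω | z ≤ (Y ω).2})
      (measurableSet_le measurable_const hY1) (measurableSet_le measurable_const hY2)
    have hc1X : {ω | t ≤ (X ω).1}ᶜ = {ω | (X ω).1 < t} := by ext ω; simp [not_le]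
    have hc2X : {ω | z ≤ (X ω).2}ᶜ = {ω | (X ω).2 < z} := by ext ω; simp [not_le]
    have hc1Y : {ω | t ≤ (Y ω).1}ᶜ = {ω | (Y ω).1 < t} := by ext ω; simp [not_le]
    have hc2Y : {ω | z ≤ (Y ω).2}ᶜ = {ω | (Y ω).2 < z} := by ext ω; simp [not_le]
    rw [hc1X, hc2X] at hIEX
    rw [hc1Y, hc2Y] at hIEY
    have hinterX : {ω | (X ω).1 < t} ∩ {ω | (X ω).2 < z} = {ω | (X ω).1 < t ∧ (X ω).2 < z} := rfl
    have hinterY : {ω | (Y ω).1 < t} ∩ {ω | (Y ω).2 < z} = {ω | (Y ω).1 < t ∧ (Y ω).2 < z} := rfl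
    rw [hinterX] at hIEX
    rw [hinterY] at hIEY
    refine enn_key (m := mX t z) (m' := mY t z)
      (a := μ {ω | (X ω).1 < t}) (a' := μ {ω | (Y ω).1 < t})
      (b := μ {ω | (X ω).2 < z}) (b' := μ {ω | (Y ω).2 < z})
      (c := μ {ω | (X ω).1 < t ∧ (X ω).2 < z}) (c' := μ {ω | (Y ω).1 < t ∧ (Y ω).2 < z})
      (s := SX1 t) (s' := SY1 t) (r := SX2 z) (r' := SY2 z)
      ?_ ?_ (hlt t z) (hpart1X t) (hpart1Y t) (hS1 t) (hpart2X z) (hpart2Y z) (hS2 z)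
    · rw [hmXdef]; simp only [hsetX]; exact hIEX
    · rw [hmYdef]; simp only [hsetY]; exact hIEY
  -- measurability of survival functions
  have hSX1m : Measurable SX1 := by
    have hs : MeasurableSet {p : ℝ × Ω | p.1 ≤ (X p.2).1} :=
      measurableSet_le measurable_fst (hX1.comp measurable_snd)
    have h := measurable_measure_prodMk_left (ν := μ) hs
    exact h
  have hSX2m : Measurable SX2 := by
    have hs : MeasurableSet {p : ℝ × Ω | p.1 ≤ (X p.2).2} :=
      measurableSet_le measurable_fst (hX2.comp measurable_snd)
    have h := measurable_measure_prodMk_left (ν := μ) hs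
    exact h
  have hSY1m : Measurable SY1 := by
    have hs : MeasurableSet {p : ℝ × Ω | p.1 ≤ (Y p.2).1} :=
      measurableSet_le measurable_fst (hY1.comp measurable_snd)
    have h := measurable_measure_prodMk_left (ν := μ) hs
    exact h
  have hSY2m : Measurable SY2 := by
    have hs : MeasurableSet {p : ℝ × Ω | p.1 ≤ (Y p.2).2} :=
      measurableSet_le measurable_fst (hY2.comp measurable_snd)
    have h := measurable_measure_prodMk_left (ν := μ) hs
    exact h
  have hmXm : Measurable fun p : ℝ × ℝ => mX p.1 p.2 := by
    have hs : MeasurableSet {p : (ℝ × ℝ) × Ω | p.1.1 ≤ (X p.2).1 ∧ p.1.2 ≤ (X p.2).2} := by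
      apply MeasurableSet.inter
      · exact measurableSet_le (measurable_fst.fst) (hX1.comp measurable_snd)
      · exact measurableSet_le (measurable_fst.snd) (hX2.comp measurable_snd)
    have h := measurable_measure_prodMk_left (ν := μ) hs
    exact h
  have hmYm : Measurable fun p : ℝ × ℝ => mY p.1 p.2 := by
    have hs : MeasurableSet {p : (ℝ × ℝ) × Ω | p.1.1 ≤ (Y p.2).1 ∧ p.1.2 ≤ (Y p.2).2} := by
      apply MeasurableSet.inter
      · exact measurableSet_le (measurable_fst.fst) (hY1.comp measurable_snd)
      · exact measurableSet_le (measurable_fst.snd) (hY2.comp measurable_snd)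
    have h := measurable_measure_prodMk_left (ν := μ) hs
    exact h
  -- lintegral quantities
  set EX : ℝ≥0∞ := ∫⁻ ω, ENNReal.ofReal (u (X ω).1 (X ω).2) ∂μ with hEXdef
  set EY : ℝ≥0∞ := ∫⁻ ω, ENNReal.ofReal (u (Y ω).1 (Y ω).2) ∂μ with hEYdef
  set AX : ℝ≥0∞ := ∫⁻ t in Ioi (0:ℝ), SX1 t * ENNReal.ofReal (g1 t) with hAXdef
  set AY : ℝ≥0∞ := ∫⁻ t in Ioi (0:ℝ), SY1 t * ENNReal.ofReal (g1 t) with hAYdef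
  set BX : ℝ≥0∞ := ∫⁻ z in Ioi (0:ℝ), SX2 z * ENNReal.ofReal (g2 z) with hBXdef
  set BY : ℝ≥0∞ := ∫⁻ z in Ioi (0:ℝ), SY2 z * ENNReal.ofReal (g2 z) with hBYdef
  set φ : ℝ → ℝ → ℝ≥0∞ := fun t z => ENNReal.ofReal (kk t z) with hφdef
  set MX : ℝ≥0∞ := ∫⁻ t in Ioi (0:ℝ), ∫⁻ z in Ioi (0:ℝ), φ t z * mX t z with hMXdef2
  set MY : ℝ≥0∞ := ∫⁻ t in Ioi (0:ℝ), ∫⁻ z in Ioi (0:ℝ), φ t z * mY t z with hMYdef2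
  -- continuity consequences
  have hg1cc : ∀ y : ℝ, Continuous fun t => p1 t y := fun y =>
    hp1c.comp (continuous_id.prodMk continuous_const)
  have hg2cc : ∀ x : ℝ, Continuous fun z => p2 x z := fun x =>
    hp2c.comp (continuous_const.prodMk continuous_id)
  have hkkct : ∀ t : ℝ, Continuous fun z => kk t z := fun t =>
    hkkc.comp (continuous_const.prodMk continuous_id)
  have hkkcz : ∀ z : ℝ, Continuous fun t => kk t z := fun z =>
    hkkc.comp (continuous_id.prodMk continuous_const)
  -- layer cake for the four marginal quantities
  have hlcX1 : ∫⁻ ω, ENNReal.ofReal (u (X ω).1 0 - u 0 0) ∂μ = AX := by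
    have h := lintegral_comp_eq_lintegral_meas_le_mul μ (f := fun ω => (X ω).1) (g := g1)
      (ae_of_all _ fun ω => (hXnn ω).1) hX1.aemeasurable
      (fun t _ => hg1c.intervalIntegrable 0 t)
      (ae_of_all _ fun t => hp1nn t 0)
    rw [hAXdef, ← h]
    apply lintegral_congr
    intro ω
    rw [hF1 0 (X ω).1]
  have hlcY1 : ∫⁻ ω, ENNReal.ofReal (u (Y ω).1 0 - u 0 0) ∂μ = AY := by
    have h := lintegral_comp_eq_lintegral_meas_le_mul μ (f := fun ω => (Y ω).1) (g := g1)
      (ae_of_all _ fun ω => (hYnn ω).1) hY1.aemeasurable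
      (fun t _ => hg1c.intervalIntegrable 0 t)
      (ae_of_all _ fun t => hp1nn t 0)
    rw [hAYdef, ← h]
    apply lintegral_congr
    intro ω
    rw [hF1 0 (Y ω).1]
  have hlcX2 : ∫⁻ ω, ENNReal.ofReal (u 0 (X ω).2 - u 0 0) ∂μ = BX := by
    have h := lintegral_comp_eq_lintegral_meas_le_mul μ (f := fun ω => (X ω).2) (g := g2)
      (ae_of_all _ fun ω => (hXnn ω).2) hX2.aemeasurable
      (fun z _ => hg2c.intervalIntegrable 0 z)
      (ae_of_all _ fun z => hp2nn 0 z)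
    rw [hBXdef, ← h]
    apply lintegral_congr
    intro ω
    rw [hF2 0 (X ω).2]
  have hlcY2 : ∫⁻ ω, ENNReal.ofReal (u 0 (Y ω).2 - u 0 0) ∂μ = BY := by
    have h := lintegral_comp_eq_lintegral_meas_le_mul μ (f := fun ω => (Y ω).2) (g := g2)
      (ae_of_all _ fun ω => (hYnn ω).2) hY2.aemeasurable
      (fun z _ => hg2c.intervalIntegrable 0 z)
      (ae_of_all _ fun z => hp2nn 0 z)
    rw [hBYdef, ← h]
    apply lintegral_congr
    intro ω
    rw [hF2 0 (Y ω).2]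
  -- double layer-cake representation of W-term
  have key : ∀ (V : Ω → ℝ × ℝ), Measurable V → (∀ ω, 0 ≤ (V ω).1 ∧ 0 ≤ (V ω).2) →
      ∫⁻ ω, ENNReal.ofReal (W (V ω).1 (V ω).2) ∂μ =
        ∫⁻ t in Ioi (0:ℝ), ∫⁻ z in Ioi (0:ℝ),
          φ t z * μ {ω | t ≤ (V ω).1 ∧ z ≤ (V ω).2} := by
    intro V hV hVnn
    have hV1 : Measurable fun ω => (V ω).1 := hV.fst
    have hV2 : Measurable fun ω => (V ω).2 := hV.snd
    set S : Set (Ω × ℝ × ℝ) := {x | x.2.1 ≤ (V x.1).1 ∧ x.2.2 ≤ (V x.1).2} with hSdef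
    have hSm : MeasurableSet S := by
      apply MeasurableSet.inter
      · exact measurableSet_le measurable_snd.fst (hV1.comp measurable_fst)
      · exact measurableSet_le measurable_snd.snd (hV2.comp measurable_fst)
    set F : Ω → ℝ → ℝ → ℝ≥0∞ := fun ω t z => φ t z * S.indicator 1 (ω, t, z) with hFdef
    -- pointwise identity
    have hpoint : ∀ ω, ∫⁻ t in Ioi (0:ℝ), ∫⁻ z in Ioi (0:ℝ), F ω t z
        = ENNReal.ofReal (W (V ω).1 (V ω).2) := by
      intro ω
      obtain ⟨ha, hb⟩ := hVnn ω
      set a := (V ω).1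
      set b := (V ω).2
      have hinner : ∀ t : ℝ, ∫⁻ z in Ioi (0:ℝ), F ω t z =
          (Iic a).indicator (fun t => ENNReal.ofReal (p1 t 0 - p1 t b)) t := by
        intro t
        by_cases hta : t ∈ Iic a
        · rw [Set.indicator_of_mem hta]
          have e1 : ∀ z : ℝ, F ω t z = (Iic b).indicator (fun z => φ t z) z := by
            intro z
            by_cases hz : z ∈ Iic b
            · have hmem : (ω, t, z) ∈ S := ⟨hta, hz⟩
              rw [Set.indicator_of_mem hz, hFdef]
              simp only
              rw [Set.indicator_of_mem hmem, Pi.one_apply, mul_one]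
            · have hmem : (ω, t, z) ∉ S := fun hc => hz hc.2
              rw [Set.indicator_of_notMem hz, hFdef]
              simp only
              rw [Set.indicator_of_notMem hmem, mul_zero]
          calc ∫⁻ z in Ioi (0:ℝ), F ω t z
              = ∫⁻ z in Ioi (0:ℝ), (Iic b).indicator (fun z => φ t z) z :=
                lintegral_congr e1
            _ = ∫⁻ z in Iic b ∩ Ioi (0:ℝ), φ t z := by
                rw [lintegral_indicator measurableSet_Iic,
                  Measure.restrict_restrict measurableSet_Iic]
            _ = ∫⁻ z in Ioc (0:ℝ) b, φ t z := by rw [Set.inter_comm, Set.Ioi_inter_Iic]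
            _ = ENNReal.ofReal (∫ z in Ioc (0:ℝ) b, kk t z) := by
                rw [ofReal_integral_eq_lintegral_ofReal ((hkkct t).integrableOn_Ioc)
                  (ae_of_all _ fun z => hkknn t z)]
            _ = ENNReal.ofReal (p1 t 0 - p1 t b) := by
                rw [← intervalIntegral.integral_of_le hb, hF3 t b]
        · rw [Set.indicator_of_notMem hta]
          have e0 : ∀ z : ℝ, F ω t z = 0 := by
            intro z
            have hmem : (ω, t, z) ∉ S := fun hc => hta hc.1
            rw [hFdef]
            simp only
            rw [Set.indicator_of_notMem hmem, mul_zero]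
          simp only [e0, lintegral_zero]
      calc ∫⁻ t in Ioi (0:ℝ), ∫⁻ z in Ioi (0:ℝ), F ω t z
          = ∫⁻ t in Ioi (0:ℝ),
              (Iic a).indicator (fun t => ENNReal.ofReal (p1 t 0 - p1 t b)) t :=
            lintegral_congr hinner
        _ = ∫⁻ t in Iic a ∩ Ioi (0:ℝ), ENNReal.ofReal (p1 t 0 - p1 t b) := by
            rw [lintegral_indicator measurableSet_Iic,
              Measure.restrict_restrict measurableSet_Iic]
        _ = ∫⁻ t in Ioc (0:ℝ) a, ENNReal.ofReal (p1 t 0 - p1 t b) := by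
            rw [Set.inter_comm, Set.Ioi_inter_Iic]
        _ = ENNReal.ofReal (∫ t in Ioc (0:ℝ) a, (p1 t 0 - p1 t b)) := by
            rw [ofReal_integral_eq_lintegral_ofReal (f := fun t => p1 t 0 - p1 t b)
              (((hg1cc 0).sub (hg1cc b)).integrableOn_Ioc)
              (ae_of_all _ fun t => hp1diff t b hb)]
        _ = ENNReal.ofReal (W a b) := by
            rw [← intervalIntegral.integral_of_le ha, hMasterW a b]
    -- measurability core
    have hFm : Measurable fun p : (Ω × ℝ) × ℝ => F p.1.1 p.1.2 p.2 := by
      apply Measurable.mul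
      · exact ENNReal.measurable_ofReal.comp
          (hkkc.measurable.comp (measurable_fst.snd.prodMk measurable_snd))
      · exact (measurable_const.indicator hSm).comp
          ((measurable_fst.fst).prodMk (measurable_fst.snd.prodMk measurable_snd))
    have hFm2 : ∀ t : ℝ, Measurable fun p : Ω × ℝ => F p.1 t p.2 := by
      intro t
      apply Measurable.mul
      · exact ENNReal.measurable_ofReal.comp
          (hkkc.measurable.comp (measurable_const.prodMk measurable_snd))
      · exact (measurable_const.indicator hSm).comp
          (measurable_fst.prodMk (measurable_const.prodMk measurable_snd))
    -- the swaps
    have hunc1 : Measurable (Function.uncurry fun ω t => ∫⁻ z in Ioi (0:ℝ), F ω t z) :=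
      Measurable.lintegral_prod_right (f := fun p : Ω × ℝ => fun z => F p.1 p.2 z) hFm
    calc ∫⁻ ω, ENNReal.ofReal (W (V ω).1 (V ω).2) ∂μ
        = ∫⁻ ω, (∫⁻ t in Ioi (0:ℝ), ∫⁻ z in Ioi (0:ℝ), F ω t z) ∂μ :=
          (lintegral_congr hpoint).symm
      _ = ∫⁻ t in Ioi (0:ℝ), ∫⁻ ω, (∫⁻ z in Ioi (0:ℝ), F ω t z) ∂μ :=
          lintegral_lintegral_swap hunc1.aemeasurable
      _ = ∫⁻ t in Ioi (0:ℝ), ∫⁻ z in Ioi (0:ℝ), ∫⁻ ω, F ω t z ∂μ := by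
          apply lintegral_congr
          intro t
          exact lintegral_lintegral_swap (hFm2 t).aemeasurable
      _ = ∫⁻ t in Ioi (0:ℝ), ∫⁻ z in Ioi (0:ℝ),
            φ t z * μ {ω | t ≤ (V ω).1 ∧ z ≤ (V ω).2} := by
          apply lintegral_congr
          intro t
          apply lintegral_congr
          intro z
          have hind : Measurable fun ω => S.indicator (1 : Ω × ℝ × ℝ → ℝ≥0∞) (ω, t, z) :=
            (measurable_const.indicator hSm).comp
              (measurable_id.prodMk measurable_const)
          rw [hFdef]
          simp only
          rw [lintegral_const_mul _ hind]
          congr 1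
          have e2 : (fun ω => S.indicator (1 : Ω × ℝ × ℝ → ℝ≥0∞) (ω, t, z)) =
              fun ω => ({ω | t ≤ (V ω).1 ∧ z ≤ (V ω).2}).indicator 1 ω := by
            funext ω
            by_cases hω : ω ∈ {ω | t ≤ (V ω).1 ∧ z ≤ (V ω).2}
            · have hmem : (ω, t, z) ∈ S := hω
              rw [Set.indicator_of_mem hmem, Set.indicator_of_mem hω]
              rfl
            · have hmem : (ω, t, z) ∉ S := fun hc => hω hc
              rw [Set.indicator_of_notMem hmem, Set.indicator_of_notMem hω]
          rw [e2, lintegral_indicator_one]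
          exact (measurableSet_le measurable_const hV1).inter
            (measurableSet_le measurable_const hV2)
  have hMXrep : ∫⁻ ω, ENNReal.ofReal (W (X ω).1 (X ω).2) ∂μ = MX :=
    key X hX hXnn
  have hMYrep : ∫⁻ ω, ENNReal.ofReal (W (Y ω).1 (Y ω).2) ∂μ = MY :=
    key Y hY hYnn
  -- measurability of ω-level integrands
  have hmuXm : Measurable fun ω => ENNReal.ofReal (u (X ω).1 (X ω).2) :=
    ENNReal.measurable_ofReal.comp (huC2.continuous.measurable.comp hX)
  have hmuYm : Measurable fun ω => ENNReal.ofReal (u (Y ω).1 (Y ω).2) :=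
    ENNReal.measurable_ofReal.comp (huC2.continuous.measurable.comp hY)
  have hcA : Continuous fun a : ℝ => u a 0 - u 0 0 :=
    (huC2.continuous.comp (continuous_id.prodMk continuous_const)).sub continuous_const
  have hcB : Continuous fun b : ℝ => u 0 b - u 0 0 :=
    (huC2.continuous.comp (continuous_const.prodMk continuous_id)).sub continuous_const
  have hAXm : Measurable fun ω => ENNReal.ofReal (u (X ω).1 0 - u 0 0) :=
    ENNReal.measurable_ofReal.comp (hcA.measurable.comp hX1)
  have hAYm : Measurable fun ω => ENNReal.ofReal (u (Y ω).1 0 - u 0 0) :=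
    ENNReal.measurable_ofReal.comp (hcA.measurable.comp hY1)
  have hBXm : Measurable fun ω => ENNReal.ofReal (u 0 (X ω).2 - u 0 0) :=
    ENNReal.measurable_ofReal.comp (hcB.measurable.comp hX2)
  have hBYm : Measurable fun ω => ENNReal.ofReal (u 0 (Y ω).2 - u 0 0) :=
    ENNReal.measurable_ofReal.comp (hcB.measurable.comp hY2)
  -- pointwise master identity at the ω level
  have hptX : ∀ ω, ENNReal.ofReal (u (X ω).1 (X ω).2) + ENNReal.ofReal (W (X ω).1 (X ω).2)
      = ENNReal.ofReal (u 0 0) +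
        (ENNReal.ofReal (u (X ω).1 0 - u 0 0) + ENNReal.ofReal (u 0 (X ω).2 - u 0 0)) := by
    intro ω
    obtain ⟨ha, hb⟩ := hXnn ω
    rw [← ENNReal.ofReal_add (hunn _ _ ha hb) (hWnn _ _ ha hb),
      ← ENNReal.ofReal_add (hG1nn _ ha) (hG2nn _ hb),
      ← ENNReal.ofReal_add (hunn 0 0 le_rfl le_rfl) (add_nonneg (hG1nn _ ha) (hG2nn _ hb))]
    congr 1
    simp only [hWdef]
    ring
  have hptY : ∀ ω, ENNReal.ofReal (u (Y ω).1 (Y ω).2) + ENNReal.ofReal (W (Y ω).1 (Y ω).2)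
      = ENNReal.ofReal (u 0 0) +
        (ENNReal.ofReal (u (Y ω).1 0 - u 0 0) + ENNReal.ofReal (u 0 (Y ω).2 - u 0 0)) := by
    intro ω
    obtain ⟨ha, hb⟩ := hYnn ω
    rw [← ENNReal.ofReal_add (hunn _ _ ha hb) (hWnn _ _ ha hb),
      ← ENNReal.ofReal_add (hG1nn _ ha) (hG2nn _ hb),
      ← ENNReal.ofReal_add (hunn 0 0 le_rfl le_rfl) (add_nonneg (hG1nn _ ha) (hG2nn _ hb))]
    congr 1
    simp only [hWdef]
    ring
  -- integrated master identities
  have hIX : EX + MX = ENNReal.ofReal (u 0 0) + (AX + BX) := by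
    rw [← hMXrep, ← hlcX1, ← hlcX2, hEXdef]
    rw [← lintegral_add_left hmuXm, ← lintegral_add_left hAXm]
    have hconst : ENNReal.ofReal (u 0 0) = ∫⁻ _ω, ENNReal.ofReal (u 0 0) ∂μ := by
      simp [lintegral_const]
    rw [hconst, ← lintegral_add_left measurable_const]
    exact lintegral_congr hptX
  have hIY : EY + MY = ENNReal.ofReal (u 0 0) + (AY + BY) := by
    rw [← hMYrep, ← hlcY1, ← hlcY2, hEYdef]
    rw [← lintegral_add_left hmuYm, ← lintegral_add_left hAYm]
    have hconst : ENNReal.ofReal (u 0 0) = ∫⁻ _ω, ENNReal.ofReal (u 0 0) ∂μ := by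
      simp [lintegral_const]
    rw [hconst, ← lintegral_add_left measurable_const]
    exact lintegral_congr hptY
  -- finiteness
  have hEXfin : EX ≠ ⊤ := by
    have h := (hasFiniteIntegral_iff_ofReal
      (ae_of_all _ fun ω => hunn _ _ (hXnn ω).1 (hXnn ω).2)).mp huXint.hasFiniteIntegral
    exact h.ne
  have hEYfin : EY ≠ ⊤ := by
    have h := (hasFiniteIntegral_iff_ofReal
      (ae_of_all _ fun ω => hunn _ _ (hYnn ω).1 (hYnn ω).2)).mp huYint.hasFiniteIntegral
    exact h.ne
  have hAXfin : AX ≠ ⊤ := by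
    rw [← hlcX1]
    refine ne_top_of_le_ne_top hEXfin (lintegral_mono fun ω => ENNReal.ofReal_le_ofReal ?_)
    have h1 := hmono2 (X ω).1 (X ω).2 (hXnn ω).2
    have h2 := hunn 0 0 le_rfl le_rfl
    linarith
  have hBXfin : BX ≠ ⊤ := by
    rw [← hlcX2]
    refine ne_top_of_le_ne_top hEXfin (lintegral_mono fun ω => ENNReal.ofReal_le_ofReal ?_)
    have h1 := hmono1 (X ω).1 (X ω).2 (hXnn ω).1
    have h2 := hunn 0 0 le_rfl le_rfl
    linarith
  have hAYfin : AY ≠ ⊤ := by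
    rw [← hlcY1]
    refine ne_top_of_le_ne_top hEYfin (lintegral_mono fun ω => ENNReal.ofReal_le_ofReal ?_)
    have h1 := hmono2 (Y ω).1 (Y ω).2 (hYnn ω).2
    have h2 := hunn 0 0 le_rfl le_rfl
    linarith
  have hBYfin : BY ≠ ⊤ := by
    rw [← hlcY2]
    refine ne_top_of_le_ne_top hEYfin (lintegral_mono fun ω => ENNReal.ofReal_le_ofReal ?_)
    have h1 := hmono1 (Y ω).1 (Y ω).2 (hYnn ω).1
    have h2 := hunn 0 0 le_rfl le_rfl
    linarith
  have hMYfin : MY ≠ ⊤ := by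
    intro h
    have h2 : EY + MY = ⊤ := by rw [h, add_top]
    rw [hIY] at h2
    exact (ENNReal.add_ne_top.mpr ⟨ENNReal.ofReal_ne_top,
      ENNReal.add_ne_top.mpr ⟨hAYfin, hBYfin⟩⟩) h2
  -- bounds on the φ-mass of sections
  have hφmz : ∀ t : ℝ, Measurable fun z => φ t z := fun t =>
    ENNReal.measurable_ofReal.comp (hkkct t).measurable
  have hφmt : ∀ z : ℝ, Measurable fun t => φ t z := fun z =>
    ENNReal.measurable_ofReal.comp (hkkcz z).measurable
  have hφm : Measurable fun p : ℝ × ℝ => φ p.1 p.2 :=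
    ENNReal.measurable_ofReal.comp hkkc.measurable
  have hK1 : ∀ t : ℝ, ∫⁻ z in Ioi (0:ℝ), φ t z ≤ ENNReal.ofReal (g1 t) := by
    intro t
    apply lint_Ioi_le_of_Ioc (hφmz t)
    intro n
    rw [hφdef]
    simp only
    rw [← ofReal_integral_eq_lintegral_ofReal ((hkkct t).integrableOn_Ioc)
      (ae_of_all _ fun z => hkknn t z)]
    apply ENNReal.ofReal_le_ofReal
    rw [← intervalIntegral.integral_of_le (by positivity : (0:ℝ) ≤ (n:ℝ)), hF3 t n]
    have := hp1nn t (n:ℝ)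
    simp only [hg1def]
    linarith
  have hK2 : ∀ z : ℝ, ∫⁻ t in Ioi (0:ℝ), φ t z ≤ ENNReal.ofReal (g2 z) := by
    intro z
    apply lint_Ioi_le_of_Ioc (hφmt z)
    intro n
    rw [hφdef]
    simp only
    rw [← ofReal_integral_eq_lintegral_ofReal ((hkkcz z).integrableOn_Ioc)
      (ae_of_all _ fun t => hkknn t z)]
    apply ENNReal.ofReal_le_ofReal
    rw [← intervalIntegral.integral_of_le (by positivity : (0:ℝ) ≤ (n:ℝ)), hF4 z n]
    have := hp2nn (n:ℝ) z
    simp only [hg2def]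
    linarith
  -- the D terms
  set D1 : ℝ≥0∞ := ∫⁻ t in Ioi (0:ℝ), (∫⁻ z in Ioi (0:ℝ), φ t z) * (SX1 t - SY1 t) with hD1def
  set D2 : ℝ≥0∞ := ∫⁻ z in Ioi (0:ℝ), (∫⁻ t in Ioi (0:ℝ), φ t z) * (SX2 z - SY2 z) with hD2def
  -- L1 : MX ≤ MY + D1 + D2
  have hmYzm : ∀ t : ℝ, Measurable fun z => mY t z :=
    fun t => hmYm.comp (measurable_const.prodMk measurable_id)
  have hL1 : MX ≤ MY + D1 + D2 := by
    have hstep1 : ∀ t : ℝ, ∫⁻ z in Ioi (0:ℝ), φ t z * mX t z ≤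
        (∫⁻ z in Ioi (0:ℝ), φ t z * mY t z) +
        (∫⁻ z in Ioi (0:ℝ), φ t z) * (SX1 t - SY1 t) +
        (∫⁻ z in Ioi (0:ℝ), φ t z * (SX2 z - SY2 z)) := by
      intro t
      have hb : ∀ z, φ t z * mX t z ≤
          φ t z * mY t z + φ t z * (SX1 t - SY1 t) + φ t z * (SX2 z - SY2 z) := by
        intro z
        calc φ t z * mX t z
            ≤ φ t z * (mY t z + (SX1 t - SY1 t) + (SX2 z - SY2 z)) :=
              mul_le_mul_right (hm t z) _
          _ = φ t z * mY t z + φ t z * (SX1 t - SY1 t) + φ t z * (SX2 z - SY2 z) := by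
              rw [mul_add, mul_add]
      calc ∫⁻ z in Ioi (0:ℝ), φ t z * mX t z
          ≤ ∫⁻ z in Ioi (0:ℝ),
              (φ t z * mY t z + φ t z * (SX1 t - SY1 t) + φ t z * (SX2 z - SY2 z)) :=
            lintegral_mono hb
        _ = (∫⁻ z in Ioi (0:ℝ), φ t z * mY t z) +
            (∫⁻ z in Ioi (0:ℝ), φ t z * (SX1 t - SY1 t)) +
            (∫⁻ z in Ioi (0:ℝ), φ t z * (SX2 z - SY2 z)) := by
            rw [lintegral_add_left (f := fun z => φ t z * mY t z + φ t z * (SX1 t - SY1 t))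
                (((hφmz t).mul (hmYzm t)).add ((hφmz t).mul_const _)),
              lintegral_add_left (f := fun z => φ t z * mY t z) ((hφmz t).mul (hmYzm t))]
        _ = (∫⁻ z in Ioi (0:ℝ), φ t z * mY t z) +
            (∫⁻ z in Ioi (0:ℝ), φ t z) * (SX1 t - SY1 t) +
            (∫⁻ z in Ioi (0:ℝ), φ t z * (SX2 z - SY2 z)) := by
            rw [lintegral_mul_const _ (hφmz t)]
    have hmeasA : Measurable fun t : ℝ => ∫⁻ z in Ioi (0:ℝ), φ t z * mY t z :=
      Measurable.lintegral_prod_right (f := fun t z => φ t z * mY t z) (hφm.mul hmYm)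
    have hmeasB : Measurable fun t : ℝ => (∫⁻ z in Ioi (0:ℝ), φ t z) * (SX1 t - SY1 t) :=
      (Measurable.lintegral_prod_right (f := fun t z => φ t z) hφm).mul (hSX1m.sub hSY1m)
    have hswapD2 : ∫⁻ t in Ioi (0:ℝ), ∫⁻ z in Ioi (0:ℝ), φ t z * (SX2 z - SY2 z) = D2 := by
      rw [lintegral_lintegral_swap (f := fun t z => φ t z * (SX2 z - SY2 z))
        (hφm.mul ((hSX2m.sub hSY2m).comp measurable_snd)).aemeasurable, hD2def]
      apply lintegral_congr
      intro z
      rw [lintegral_mul_const _ (hφmt z)]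
    calc MX = ∫⁻ t in Ioi (0:ℝ), ∫⁻ z in Ioi (0:ℝ), φ t z * mX t z := hMXdef2
      _ ≤ ∫⁻ t in Ioi (0:ℝ),
            ((∫⁻ z in Ioi (0:ℝ), φ t z * mY t z) +
            (∫⁻ z in Ioi (0:ℝ), φ t z) * (SX1 t - SY1 t) +
            (∫⁻ z in Ioi (0:ℝ), φ t z * (SX2 z - SY2 z))) := lintegral_mono hstep1
      _ = (∫⁻ t in Ioi (0:ℝ), ∫⁻ z in Ioi (0:ℝ), φ t z * mY t z) + D1 +
            (∫⁻ t in Ioi (0:ℝ), ∫⁻ z in Ioi (0:ℝ), φ t z * (SX2 z - SY2 z)) := by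
          rw [lintegral_add_left (f := fun t => (∫⁻ z in Ioi (0:ℝ), φ t z * mY t z) +
            (∫⁻ z in Ioi (0:ℝ), φ t z) * (SX1 t - SY1 t)) (hmeasA.add hmeasB),
            lintegral_add_left hmeasA, hD1def]
      _ = MY + D1 + D2 := by rw [hswapD2, hMYdef2]
  -- L2 : AY + D1 ≤ AX
  have hL2 : AY + D1 ≤ AX := by
    have hmAY : Measurable fun t : ℝ => SY1 t * ENNReal.ofReal (g1 t) :=
      hSY1m.mul (ENNReal.measurable_ofReal.comp hg1c.measurable)
    rw [hAYdef, hAXdef, hD1def, ← lintegral_add_left hmAY]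
    apply lintegral_mono
    intro t
    calc SY1 t * ENNReal.ofReal (g1 t) + (∫⁻ z in Ioi (0:ℝ), φ t z) * (SX1 t - SY1 t)
        ≤ SY1 t * ENNReal.ofReal (g1 t) + ENNReal.ofReal (g1 t) * (SX1 t - SY1 t) :=
          add_le_add_right (mul_le_mul_left (hK1 t) _) _
      _ = (SY1 t + (SX1 t - SY1 t)) * ENNReal.ofReal (g1 t) := by
          rw [add_mul, mul_comm (ENNReal.ofReal (g1 t))]
      _ = SX1 t * ENNReal.ofReal (g1 t) := by
          rw [add_comm, tsub_add_cancel_of_le (hS1 t)]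
  -- L3 : BY + D2 ≤ BX
  have hL3 : BY + D2 ≤ BX := by
    have hmBY : Measurable fun z : ℝ => SY2 z * ENNReal.ofReal (g2 z) :=
      hSY2m.mul (ENNReal.measurable_ofReal.comp hg2c.measurable)
    rw [hBYdef, hBXdef, hD2def, ← lintegral_add_left hmBY]
    apply lintegral_mono
    intro z
    calc SY2 z * ENNReal.ofReal (g2 z) + (∫⁻ t in Ioi (0:ℝ), φ t z) * (SX2 z - SY2 z)
        ≤ SY2 z * ENNReal.ofReal (g2 z) + ENNReal.ofReal (g2 z) * (SX2 z - SY2 z) :=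
          add_le_add_right (mul_le_mul_left (hK2 z) _) _
      _ = (SY2 z + (SX2 z - SY2 z)) * ENNReal.ofReal (g2 z) := by
          rw [add_mul, mul_comm (ENNReal.ofReal (g2 z))]
      _ = SX2 z * ENNReal.ofReal (g2 z) := by
          rw [add_comm, tsub_add_cancel_of_le (hS2 z)]
  -- assembly
  have hkey : AY + BY + MX ≤ AX + BX + MY := by
    calc AY + BY + MX ≤ AY + BY + (MY + D1 + D2) := add_le_add_right hL1 _
      _ = (AY + D1) + (BY + D2) + MY := by ring
      _ ≤ AX + BX + MY := add_le_add_left (add_le_add hL2 hL3) _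
  have hEnn : EY ≤ EX := by
    have hT : MY + (AX + BX) ≠ ⊤ :=
      ENNReal.add_ne_top.mpr ⟨hMYfin, ENNReal.add_ne_top.mpr ⟨hAXfin, hBXfin⟩⟩
    have hchain : EY + (MY + (AX + BX)) ≤ EX + (MY + (AX + BX)) := by
      calc EY + (MY + (AX + BX)) = (EY + MY) + (AX + BX) := by ring
        _ = (ENNReal.ofReal (u 0 0) + (AY + BY)) + (AX + BX) := by rw [hIY]
        _ = (ENNReal.ofReal (u 0 0) + (AX + BX)) + (AY + BY) := by ring
        _ = (EX + MX) + (AY + BY) := by rw [hIX]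
        _ = EX + (AY + BY + MX) := by ring
        _ ≤ EX + (AX + BX + MY) := add_le_add_right hkey _
        _ = EX + (MY + (AX + BX)) := by ring
    exact (ENNReal.add_le_add_iff_right hT).mp hchain
  -- conclude at the level of real integrals
  rw [integral_eq_lintegral_of_nonneg_ae
      (ae_of_all _ fun ω => hunn _ _ (hYnn ω).1 (hYnn ω).2) huYint.aestronglyMeasurable,
    integral_eq_lintegral_of_nonneg_ae
      (ae_of_all _ fun ω => hunn _ _ (hXnn ω).1 (hXnn ω).2) huXint.aestronglyMeasurable]
  exact ENNReal.toReal_mono hEXfin hEnn
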